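/- Consider a finite MDP (S, A, P, r) with r ∈ [0,1] and discount factor γ ∈ [0,1). Suppose there exist J* ∈ ℝ and v* : S → ℝ satisfying the average-reward Bellman optimality equation: J* + v*(s) = max_a (r(s,a) + ∑_{s'} P(s'|s,a) v*(s')) for all s. Let V* be the optimal value function of the γ-discounted MDP. Then for all s ∈ S, |(1−γ)V*(s) − J*| ≤ (1−γ)·sp(v*), where sp(v*) = max v* − min v*. -/
import Mathlib

/-- Averaging lemma: a convex combination respects a pointwise bound with slack. -/
lemma avg_le_avg_add {S : Type*} [Fintype S] (p : S → ℝ) (hp : ∀ s, 0 ≤ p s)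
    (hp1 : ∑ s, p s = 1) (u w : S → ℝ) (d : ℝ) (h : ∀ s, u s ≤ w s + d) :
    ∑ s, p s * u s ≤ (∑ s, p s * w s) + d := by
  have h1 : ∑ s, p s * u s ≤ ∑ s, p s * (w s + d) :=
    Finset.sum_le_sum fun s _ => mul_le_mul_of_nonneg_left (h s) (hp s)
  have h2 : ∑ s, p s * (w s + d) = (∑ s, p s * w s) + d := by
    simp [mul_add, Finset.sum_add_distrib, ← Finset.sum_mul, hp1]
  linarith

/-- If `f` is a super-solution of the discounted Bellman operator, it dominates
the fixed point `V`. -/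
lemma fixed_le_of_super {S A : Type*} [Fintype S] [Fintype A] [Nonempty S] [Nonempty A]
    (P : S → A → S → ℝ)
    (hP : ∀ s a, (∀ s', 0 ≤ P s a s') ∧ ∑ s', P s a s' = 1)
    (γ : ℝ) (hγ0 : 0 ≤ γ) (hγ1 : γ < 1)
    (r : S → A → ℝ) (V f : S → ℝ)
    (hV : ∀ s, V s = Finset.univ.sup' Finset.univ_nonempty
        (fun a => r s a + γ * ∑ s', P s a s' * V s'))
    (hf : ∀ s, Finset.univ.sup' Finset.univ_nonempty
        (fun a => r s a + γ * ∑ s', P s a s' * f s') ≤ f s) :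
    ∀ s, V s ≤ f s := by
  set D := Finset.univ.sup' Finset.univ_nonempty (fun s => V s - f s) with hD
  have hpt : ∀ s', V s' ≤ f s' + max D 0 := by
    intro s'
    have := Finset.le_sup' (fun s => V s - f s) (Finset.mem_univ s')
    have : V s' - f s' ≤ D := this
    have : V s' - f s' ≤ max D 0 := this.trans (le_max_left _ _)
    linarith
  have hstep : ∀ s, V s ≤ f s + γ * max D 0 := by
    intro s
    rw [hV s]
    apply Finset.sup'_le
    intro a _
    have hsum : ∑ s', P s a s' * V s' ≤ (∑ s', P s a s' * f s') + max D 0 :=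
      avg_le_avg_add _ (hP s a).1 (hP s a).2 _ _ _ hpt
    have h1 : r s a + γ * ∑ s', P s a s' * V s'
        ≤ (r s a + γ * ∑ s', P s a s' * f s') + γ * max D 0 := by
      nlinarith [hsum]
    have h2 : r s a + γ * ∑ s', P s a s' * f s'
        ≤ Finset.univ.sup' Finset.univ_nonempty
          (fun a => r s a + γ * ∑ s', P s a s' * f s') :=
      Finset.le_sup' (fun a => r s a + γ * ∑ s', P s a s' * f s') (Finset.mem_univ a)
    have := hf s
    linarith
  have hDle : D ≤ γ * max D 0 := by
    apply Finset.sup'_le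
    intro s _
    have := hstep s
    linarith
  have hD0 : D ≤ 0 := by
    by_contra h
    push_neg at h
    rw [max_eq_left h.le] at hDle
    nlinarith
  intro s
  have := Finset.le_sup' (fun s => V s - f s) (Finset.mem_univ s)
  have : V s - f s ≤ D := this
  linarith

/-- If `g` is a sub-solution of the discounted Bellman operator, it is dominated
by the fixed point `V`. -/
lemma sub_le_fixed {S A : Type*} [Fintype S] [Fintype A] [Nonempty S] [Nonempty A]
    (P : S → A → S → ℝ)
    (hP : ∀ s a, (∀ s', 0 ≤ P s a s') ∧ ∑ s', P s a s' = 1)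
    (γ : ℝ) (hγ0 : 0 ≤ γ) (hγ1 : γ < 1)
    (r : S → A → ℝ) (V g : S → ℝ)
    (hV : ∀ s, V s = Finset.univ.sup' Finset.univ_nonempty
        (fun a => r s a + γ * ∑ s', P s a s' * V s'))
    (hg : ∀ s, g s ≤ Finset.univ.sup' Finset.univ_nonempty
        (fun a => r s a + γ * ∑ s', P s a s' * g s')) :
    ∀ s, g s ≤ V s := by
  set D := Finset.univ.sup' Finset.univ_nonempty (fun s => g s - V s) with hD
  have hpt : ∀ s', g s' ≤ V s' + max D 0 := by
    intro s'
    have := Finset.le_sup' (fun s => g s - V s) (Finset.mem_univ s')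
    have : g s' - V s' ≤ D := this
    have : g s' - V s' ≤ max D 0 := this.trans (le_max_left _ _)
    linarith
  have hstep : ∀ s, g s ≤ V s + γ * max D 0 := by
    intro s
    refine (hg s).trans ?_
    rw [hV s]
    have : Finset.univ.sup' Finset.univ_nonempty
        (fun a => r s a + γ * ∑ s', P s a s' * g s')
        ≤ Finset.univ.sup' Finset.univ_nonempty
          (fun a => r s a + γ * ∑ s', P s a s' * V s') + γ * max D 0 := by
      apply Finset.sup'_le
      intro a _
      have hsum : ∑ s', P s a s' * g s' ≤ (∑ s', P s a s' * V s') + max D 0 :=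
        avg_le_avg_add _ (hP s a).1 (hP s a).2 _ _ _ hpt
      have h2 : r s a + γ * ∑ s', P s a s' * V s'
          ≤ Finset.univ.sup' Finset.univ_nonempty
            (fun a => r s a + γ * ∑ s', P s a s' * V s') :=
        Finset.le_sup' (fun a => r s a + γ * ∑ s', P s a s' * V s') (Finset.mem_univ a)
      nlinarith [hsum]
    linarith
  have hDle : D ≤ γ * max D 0 := by
    apply Finset.sup'_le
    intro s _
    have := hstep s
    linarith
  have hD0 : D ≤ 0 := by
    by_contra h
    push_neg at h
    rw [max_eq_left h.le] at hDle
    nlinarith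
  intro s
  have := Finset.le_sup' (fun s => g s - V s) (Finset.mem_univ s)
  have : g s - V s ≤ D := this
  linarith

/-- Discounted approximation of the average-reward setting (Lemma 2(ii) in
Wei et al. 2020): if `(J*, v*)` solves the average-reward Bellman optimality
equation and `V*` is the optimal `γ`-discounted value function (the unique fixed
point of the discounted Bellman optimality operator), then
`|(1−γ)V*(s) − J*| ≤ (1−γ)·sp(v*)` for all states `s`. -/
theorem discounted_approximates_average_reward
    {S A : Type*} [Fintype S] [Fintype A] [Nonempty S] [Nonempty A]
    (P : S → A → S → ℝ)
    (hP : ∀ s a, (∀ s', 0 ≤ P s a s') ∧ ∑ s', P s a s' = 1)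
    (r : S → A → ℝ) (hr : ∀ s a, r s a ∈ Set.Icc (0 : ℝ) 1)
    (γ : ℝ) (hγ : γ ∈ Set.Ico (0 : ℝ) 1)
    (Jstar : ℝ) (vstar : S → ℝ)
    (hBell : ∀ s, Jstar + vstar s =
      Finset.univ.sup' Finset.univ_nonempty
        (fun a => r s a + ∑ s', P s a s' * vstar s'))
    (Vstar : S → ℝ)
    (hVstar : ∀ s, Vstar s =
      Finset.univ.sup' Finset.univ_nonempty
        (fun a => r s a + γ * ∑ s', P s a s' * Vstar s')) :
    ∀ s, |(1 - γ) * Vstar s - Jstar|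
      ≤ (1 - γ) * (Finset.univ.sup' Finset.univ_nonempty vstar
          - Finset.univ.inf' Finset.univ_nonempty vstar) := by
  obtain ⟨hγ0, hγ1⟩ := hγ
  have h1γ : (0:ℝ) < 1 - γ := by linarith
  set m := Finset.univ.inf' Finset.univ_nonempty vstar with hm
  set M := Finset.univ.sup' Finset.univ_nonempty vstar with hM
  have hmM : m ≤ M := by
    obtain ⟨s⟩ := (inferInstance : Nonempty S)
    exact (Finset.inf'_le _ (Finset.mem_univ s)).trans
      (Finset.le_sup' _ (Finset.mem_univ s))
  -- bounds on averaged vstar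
  have hsum_lb : ∀ s a, m ≤ ∑ s', P s a s' * vstar s' := by
    intro s a
    have h1 : ∑ s', P s a s' * m ≤ ∑ s', P s a s' * vstar s' :=
      Finset.sum_le_sum fun s' _ => mul_le_mul_of_nonneg_left
        (Finset.inf'_le _ (Finset.mem_univ s')) ((hP s a).1 s')
    have h2 : ∑ s', P s a s' * m = m := by
      rw [← Finset.sum_mul, (hP s a).2, one_mul]
    linarith
  have hsum_ub : ∀ s a, ∑ s', P s a s' * vstar s' ≤ M := by
    intro s a
    have h1 : ∑ s', P s a s' * vstar s' ≤ ∑ s', P s a s' * M :=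
      Finset.sum_le_sum fun s' _ => mul_le_mul_of_nonneg_left
        (Finset.le_sup' _ (Finset.mem_univ s')) ((hP s a).1 s')
    have h2 : ∑ s', P s a s' * M = M := by
      rw [← Finset.sum_mul, (hP s a).2, one_mul]
    linarith
  -- upper bound: Vstar ≤ f with f s = Jstar/(1-γ) - m + vstar s
  set f : S → ℝ := fun s => Jstar / (1 - γ) - m + vstar s with hf
  have hconstf : ∀ s a, ∑ s', P s a s' * f s'
      = (Jstar / (1 - γ) - m) + ∑ s', P s a s' * vstar s' := by
    intro s a
    simp only [hf, mul_add, Finset.sum_add_distrib, ← Finset.sum_mul, (hP s a).2, one_mul]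
  have hfsuper : ∀ s, Finset.univ.sup' Finset.univ_nonempty
      (fun a => r s a + γ * ∑ s', P s a s' * f s') ≤ f s := by
    intro s
    apply Finset.sup'_le
    intro a _
    have hle : r s a + ∑ s', P s a s' * vstar s'
        ≤ Finset.univ.sup' Finset.univ_nonempty
          (fun a => r s a + ∑ s', P s a s' * vstar s') :=
      Finset.le_sup' (fun a => r s a + ∑ s', P s a s' * vstar s') (Finset.mem_univ a)
    rw [← hBell s] at hle
    rw [hconstf s a]
    have hγK : γ * (Jstar / (1 - γ) - m) + Jstar - (1 - γ) * m
        = (1 - γ) * (Jstar / (1 - γ) - m) + Jstar - (1-γ)*m - (1 - 2*γ) * (Jstar / (1-γ) - m) := by ring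
    have key : γ * ((Jstar / (1 - γ) - m) + ∑ s', P s a s' * vstar s')
        ≤ γ * (Jstar / (1 - γ) - m) + (∑ s', P s a s' * vstar s') - (1 - γ) * m := by
      have := hsum_lb s a
      nlinarith
    have hdiv : (1 - γ) * (Jstar / (1 - γ)) = Jstar := by
      field_simp
    nlinarith [hle]
  have hub := fixed_le_of_super P hP γ hγ0 hγ1 r Vstar f hVstar hfsuper
  -- lower bound: g ≤ Vstar with g s = Jstar/(1-γ) - M + vstar s
  set g : S → ℝ := fun s => Jstar / (1 - γ) - M + vstar s with hg
  have hconstg : ∀ s a, ∑ s', P s a s' * g s'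
      = (Jstar / (1 - γ) - M) + ∑ s', P s a s' * vstar s' := by
    intro s a
    simp only [hg, mul_add, Finset.sum_add_distrib, ← Finset.sum_mul, (hP s a).2, one_mul]
  have hgsub : ∀ s, g s ≤ Finset.univ.sup' Finset.univ_nonempty
      (fun a => r s a + γ * ∑ s', P s a s' * g s') := by
    intro s
    obtain ⟨a, _, ha⟩ := Finset.exists_mem_eq_sup' Finset.univ_nonempty
      (fun a => r s a + ∑ s', P s a s' * vstar s')
    have hBa : Jstar + vstar s = r s a + ∑ s', P s a s' * vstar s' := by
      rw [hBell s, ha]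
    have hle : r s a + γ * ∑ s', P s a s' * g s'
        ≤ Finset.univ.sup' Finset.univ_nonempty
          (fun a => r s a + γ * ∑ s', P s a s' * g s') :=
      Finset.le_sup' (fun a => r s a + γ * ∑ s', P s a s' * g s') (Finset.mem_univ a)
    rw [hconstg s a] at hle
    have key : γ * (Jstar / (1 - γ) - M) + (∑ s', P s a s' * vstar s') - (1 - γ) * M
        ≤ γ * ((Jstar / (1 - γ) - M) + ∑ s', P s a s' * vstar s') := by
      have := hsum_ub s a
      nlinarith
    have hdiv : (1 - γ) * (Jstar / (1 - γ)) = Jstar := by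
      field_simp
    show Jstar / (1 - γ) - M + vstar s ≤ _
    linarith [hle, key, hBa, hdiv]
  have hlb := sub_le_fixed P hP γ hγ0 hγ1 r Vstar g hVstar hgsub
  intro s
  have h1 := hub s
  have h2 := hlb s
  have hvs1 : vstar s ≤ M := Finset.le_sup' _ (Finset.mem_univ s)
  have hvs2 : m ≤ vstar s := Finset.inf'_le _ (Finset.mem_univ s)
  have hdiv : (1 - γ) * (Jstar / (1 - γ)) = Jstar := by field_simp
  rw [abs_le]
  constructor
  · have : Jstar / (1 - γ) - M + vstar s ≤ Vstar s := h2
    nlinarith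
  · have : Vstar s ≤ Jstar / (1 - γ) - m + vstar s := h1
    nlinarith
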